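/- Let s₁₂, s₁₃, s₁₄, s₂₅, s₃₅, s₄₅ be complex numbers with s₁₃ ≠ 0, s₁₄ ≠ 0, s₂₅ ≠ 0, and define the 2×2 complex matrices T₃ = [[−s₁₂/s₁₃, −s₁₄/s₁₃], [s₁₂s₄₅/(s₁₃s₂₅), (s₁₄s₄₅ − s₁₃s₃₅)/(s₁₃s₂₅)]] and T₄ = [[0, 1], [−s₁₂s₄₅/(s₁₄s₂₅), (s₁₃s₃₅ − s₁₄s₄₅ − s₁₂s₂₅)/(s₁₄s₂₅)]]. Then: (i) T₃ and T₄ commute, T₃T₄ = T₄T₃; (ii) they satisfy the first scattering polynomial, s₁₂·𝟙 + s₁₃ T₃ + s₁₄ T₄ = 0 (the 2×2 zero matrix); and (iii) they satisfy the second scattering polynomial, s₄₅ T₃ + s₃₅ T₄ + s₂₅ T₃T₄ = 0. -/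
import Mathlib


set_option maxHeartbeats 2000000 in
/-- The 5-point companion matrices `T₃`, `T₄` commute and satisfy the two
gauge-fixed scattering polynomials:
`s₁₂·𝟙 + s₁₃T₃ + s₁₄T₄ = 0` and `s₄₅T₃ + s₃₅T₄ + s₂₅T₃T₄ = 0`. -/
theorem five_point_companion_matrices
    (s₁₂ s₁₃ s₁₄ s₂₅ s₃₅ s₄₅ : ℂ)
    (h13 : s₁₃ ≠ 0) (h14 : s₁₄ ≠ 0) (h25 : s₂₅ ≠ 0)
    (T₃ T₄ : Matrix (Fin 2) (Fin 2) ℂ)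
    (hT₃ : T₃ = !![-(s₁₂ / s₁₃), -(s₁₄ / s₁₃);
        s₁₂ * s₄₅ / (s₁₃ * s₂₅), (s₁₄ * s₄₅ - s₁₃ * s₃₅) / (s₁₃ * s₂₅)])
    (hT₄ : T₄ = !![0, 1;
        -(s₁₂ * s₄₅ / (s₁₄ * s₂₅)),
          (s₁₃ * s₃₅ - s₁₄ * s₄₅ - s₁₂ * s₂₅) / (s₁₄ * s₂₅)]) :
    T₃ * T₄ = T₄ * T₃ ∧
      s₁₂ • (1 : Matrix (Fin 2) (Fin 2) ℂ) + s₁₃ • T₃ + s₁₄ • T₄ = 0 ∧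
      s₄₅ • T₃ + s₃₅ • T₄ + s₂₅ • (T₃ * T₄) = 0 := by
  subst hT₃ hT₄
  refine ⟨?_, ?_, ?_⟩ <;>
  · simp only [Matrix.mul_fin_two, Matrix.one_fin_two, Matrix.smul_of,
      Matrix.smul_cons, Matrix.smul_empty, Matrix.add_cons, Matrix.head_cons,
      Matrix.tail_cons, Matrix.empty_add_empty, Matrix.of_add_of, smul_eq_mul]
    ext i j
    fin_cases i <;> fin_cases j <;>
      simp <;> field_simp <;> ring
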